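/- Let α > 0, let k : ℝ → ℝ be 2π-periodic with k ≥ 1, and let η₁, η₂ : ℝ → ℝ be differentiable 2π-periodic functions satisfying η₁′ = −α k η₂ and η₂′ = α k η₁ on ℝ. Define f(z) = |z|^α (η₁(θ) + i η₂(θ)) for z = ρ e^{iθ} ≠ 0. Then for every z = ρ e^{iθ} ≠ 0, the operator norm of the real Fréchet derivative satisfies ‖Df(z)‖² = α² k(θ)² ρ^{2(α−1)} (η₁(θ)² + η₂(θ)²). -/

import Mathlib

set_option maxRecDepth 8000
set_option maxHeartbeats 1000000

open Complex

/-- For `α > 0`, `k ≥ 1` a `2π`-periodic function and `η₁, η₂`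
differentiable `2π`-periodic functions satisfying `η₁′ = −α k η₂`, `η₂′ = α k η₁`,
the map `f(z) = |z|^α (η₁(arg z) + i η₂(arg z))` satisfies, at every `z ≠ 0` with
`θ = arg z` and `ρ = |z|`,
`‖Df(z)‖² = α² k(θ)² ρ^{2(α−1)} (η₁(θ)² + η₂(θ)²)`. -/
theorem opNorm_sq_generalized_stretching (α : ℝ) (hα : 0 < α)
    (k η₁ η₂ : ℝ → ℝ)
    (hk1 : ∀ θ, 1 ≤ k θ) (hkper : Function.Periodic k (2 * Real.pi))
    (hη₁per : Function.Periodic η₁ (2 * Real.pi))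
    (hη₂per : Function.Periodic η₂ (2 * Real.pi))
    (hη₁ : ∀ θ : ℝ, HasDerivAt η₁ (-(α * k θ * η₂ θ)) θ)
    (hη₂ : ∀ θ : ℝ, HasDerivAt η₂ (α * k θ * η₁ θ) θ)
    (f : ℂ → ℂ)
    (hf : ∀ z : ℂ, f z =
      (↑(‖z‖ ^ α) : ℂ) * (↑(η₁ z.arg) + ↑(η₂ z.arg) * Complex.I)) :
    ∀ z : ℂ, z ≠ 0 → DifferentiableAt ℝ f z ∧
      ‖fderiv ℝ f z‖ ^ 2 =
        α ^ 2 * k z.arg ^ 2 * ‖z‖ ^ (2 * (α - 1)) *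
          (η₁ z.arg ^ 2 + η₂ z.arg ^ 2) := by
  -- the combined function g = η₁ + i η₂
  set g : ℝ → ℂ := fun t => (η₁ t : ℂ) + (η₂ t : ℂ) * I with hgdef
  have hgper : Function.Periodic g (2 * Real.pi) := by
    intro t
    simp only [hgdef, hη₁per t, hη₂per t]
  have hgderiv : ∀ t, HasDerivAt g ((α * k t) • (I * g t)) t := by
    intro t
    have h := ((hη₁ t).ofReal_comp).add (((hη₂ t).ofReal_comp).mul_const I)
    refine h.congr_deriv (Eq.symm ?_)
    rw [Complex.real_smul, hgdef]
    push_cast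
    ring_nf
    rw [Complex.I_sq]
    ring
  have hPabs : ∀ z : ℂ, Complex.normSq z ^ (α/2) = ‖z‖ ^ α := by
    intro z
    rw [Complex.norm_def, Real.sqrt_eq_rpow, ← Real.rpow_mul (Complex.normSq_nonneg z)]
    congr 1
    ring
  intro z₀ hz₀
  set θ₀ := z₀.arg with hθ₀def
  set ρ := ‖z₀‖ with hρdef
  have hρ : 0 < ρ := norm_pos_iff.mpr hz₀
  set s := Complex.normSq z₀ with hsdef
  have hs : 0 < s := Complex.normSq_pos.mpr hz₀
  -- derivative of normSq
  have hN : HasFDerivAt Complex.normSq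
      ((2*z₀.re) • (Complex.reCLM : ℂ →L[ℝ] ℝ) + (2*z₀.im) • (Complex.imCLM : ℂ →L[ℝ] ℝ)) z₀ := by
    have h := ((Complex.reCLM.hasFDerivAt (x := z₀)).mul (Complex.reCLM.hasFDerivAt (x := z₀))).add
      ((Complex.imCLM.hasFDerivAt (x := z₀)).mul (Complex.imCLM.hasFDerivAt (x := z₀)))
    have he : Complex.normSq = fun z : ℂ =>
        Complex.reCLM z * Complex.reCLM z + Complex.imCLM z * Complex.imCLM z := by
      funext z; simp [Complex.normSq_apply]
    rw [he]
    refine h.congr_fderiv (Eq.symm ?_)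
    ext v
    simp
    ring
  -- derivative of P z = normSq z ^ (α/2)
  set Pd : ℂ →L[ℝ] ℝ := (α/2 * s ^ (α/2 - 1)) •
      ((2*z₀.re) • (Complex.reCLM : ℂ →L[ℝ] ℝ) + (2*z₀.im) • (Complex.imCLM : ℂ →L[ℝ] ℝ)) with hPddef
  have hP : HasFDerivAt (fun z : ℂ => Complex.normSq z ^ (α/2)) Pd z₀ := by
    have h2 : HasDerivAt (fun x : ℝ => x ^ (α/2)) (α/2 * s ^ (α/2 - 1)) (Complex.normSq z₀) :=
      Real.hasDerivAt_rpow_const (Or.inl hs.ne')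
    exact h2.comp_hasFDerivAt z₀ hN
  -- derivative of the branch of the argument
  have hlog : HasDerivAt (fun z : ℂ => Complex.log (z / z₀)) z₀⁻¹ z₀ := by
    have h1 : HasDerivAt (fun z : ℂ => z / z₀) z₀⁻¹ z₀ := by
      simpa [one_div] using (hasDerivAt_id z₀).div_const z₀
    have h2 : HasDerivAt Complex.log 1 ((fun z : ℂ => z / z₀) z₀) := by
      show HasDerivAt Complex.log 1 (z₀ / z₀)
      rw [div_self hz₀]
      simpa using Complex.hasDerivAt_log Complex.one_mem_slitPlane
    exact (HasDerivAt.comp (h := fun z : ℂ => z / z₀) z₀ h2 h1).congr_deriv (one_mul _)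
  set Tθ : ℂ →L[ℝ] ℝ := Complex.imCLM.comp
      ((ContinuousLinearMap.smulRight (1 : ℂ →L[ℂ] ℂ) z₀⁻¹).restrictScalars ℝ) with hTθdef
  set θf : ℂ → ℝ := fun z => θ₀ + (Complex.log (z / z₀)).im with hθfdef
  have hθim : HasFDerivAt θf Tθ z₀ := by
    have h := Complex.imCLM.hasFDerivAt.comp z₀ ((hlog.hasFDerivAt).restrictScalars ℝ)
    have h2 := (hasFDerivAt_const θ₀ z₀).add h
    refine h2.congr_fderiv (Eq.symm ?_)
    ext v
    simp [hTθdef]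
  have hθz₀ : θf z₀ = θ₀ := by
    simp [hθfdef, div_self hz₀]
  set gd : ℂ := (α * k θ₀) • (I * g θ₀) with hgddef
  have hG : HasFDerivAt (fun z : ℂ => g (θf z))
      ((ContinuousLinearMap.smulRight (1 : ℝ →L[ℝ] ℝ) gd).comp Tθ) z₀ := by
    have hg' : HasDerivAt g gd (θf z₀) := by rw [hθz₀]; exact hgderiv θ₀
    exact (hg'.hasFDerivAt).comp z₀ hθim
  set Gd : ℂ →L[ℝ] ℂ := (ContinuousLinearMap.smulRight (1 : ℝ →L[ℝ] ℝ) gd).comp Tθ with hGddef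
  set D : ℂ →L[ℝ] ℂ := (s ^ (α/2)) • Gd + Pd.smulRight (g θ₀) with hDdef
  have hF : HasFDerivAt (fun z : ℂ => (Complex.normSq z ^ (α/2)) • g (θf z)) D z₀ := by
    have h := hP.smul hG
    rwa [hθz₀] at h
  -- f agrees with the local representation near z₀
  have hev : f =ᶠ[nhds z₀] fun z : ℂ => (Complex.normSq z ^ (α/2)) • g (θf z) := by
    have hopen : IsOpen {z : ℂ | z / z₀ ∈ Complex.slitPlane} :=
      Complex.isOpen_slitPlane.preimage (continuous_id.div_const z₀)
    have hmem : z₀ ∈ {z : ℂ | z / z₀ ∈ Complex.slitPlane} := by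
      simp [div_self hz₀]
    filter_upwards [hopen.mem_nhds hmem] with z hzU
    have hz : z ≠ 0 := by
      intro h
      rw [h, zero_div] at hzU
      exact Complex.slitPlane_ne_zero hzU rfl
    have h1 : ((θf z : ℝ) : Real.Angle) = (z.arg : Real.Angle) := by
      have h2 := Complex.arg_div_coe_angle hz hz₀
      simp only [hθfdef, Complex.log_im]
      rw [Real.Angle.coe_add, h2]
      abel
    obtain ⟨n, hn⟩ := Real.Angle.angle_eq_iff_two_pi_dvd_sub.mp h1
    have hθz : θf z = z.arg + (n : ℝ) * (2 * Real.pi) := by linear_combination hn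
    have hgg : g (θf z) = g z.arg := by
      rw [hθz]
      exact (hgper.int_mul n) z.arg
    rw [hf z, hgg, hPabs z, Complex.real_smul]
  have hDf : HasFDerivAt f D z₀ := hF.congr_of_eventuallyEq hev
  refine ⟨hDf.differentiableAt, ?_⟩
  rw [hDf.fderiv]
  -- pointwise formula for D
  have hDv : ∀ v : ℂ, D v = (α * s ^ (α/2 - 1)) •
      (g θ₀ * (((z₀.re*v.re + z₀.im*v.im : ℝ) : ℂ) +
        ((k θ₀ : ℝ) : ℂ) * ((z₀.re*v.im - z₀.im*v.re : ℝ) : ℂ) * I)) := by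
    intro v
    have hTv : Tθ v = (z₀.re*v.im - z₀.im*v.re) / s := by
      rw [hsdef, hTθdef]
      simp [Complex.mul_im, Complex.inv_re, Complex.inv_im]
      ring
    have hfact : s ^ (α/2) = s ^ (α/2-1) * s := by
      rw [← Real.rpow_add_one hs.ne']
      ring_nf
    simp only [hDdef, ContinuousLinearMap.add_apply, ContinuousLinearMap.smul_apply,
      ContinuousLinearMap.coe_smul', Pi.smul_apply, hGddef, ContinuousLinearMap.coe_comp',
      Function.comp_apply, ContinuousLinearMap.smulRight_apply, ContinuousLinearMap.one_apply,
      ContinuousLinearMap.coe_add', Pi.add_apply, Complex.coe_smul]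
    rw [hTv, hPddef]
    simp only [ContinuousLinearMap.smul_apply, ContinuousLinearMap.add_apply,
      ContinuousLinearMap.coe_smul', Pi.smul_apply, Complex.reCLM_apply, Complex.imCLM_apply,
      smul_eq_mul]
    rw [hgddef]
    rw [Complex.real_smul, Complex.real_smul, Complex.real_smul, Complex.real_smul,
      Complex.real_smul]
    rw [hfact]
    have hsne : ((s : ℝ) : ℂ) ≠ 0 := by
      exact_mod_cast Complex.ofReal_ne_zero.mpr hs.ne'
    push_cast
    field_simp
    ring
  -- abbreviations for the norm computation
  set c₀ : ℝ := Real.sqrt (η₁ θ₀ ^ 2 + η₂ θ₀ ^ 2) with hc₀def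
  have hc₀nn : 0 ≤ c₀ := Real.sqrt_nonneg _
  have habsg : ‖g θ₀‖ = c₀ := by
    rw [hgdef]
    exact Complex.norm_add_mul_I _ _
  have hk₀ : (0:ℝ) < k θ₀ := lt_of_lt_of_le one_pos (hk1 θ₀)
  have hsnn : (0:ℝ) ≤ s ^ (α/2 - 1) := Real.rpow_nonneg hs.le _
  have hsqrt_s : Real.sqrt s = ρ := by
    rw [hsdef, hρdef, ← Complex.norm_def]
  have hs_rho : s = ρ ^ (2:ℕ) := (Complex.sq_norm z₀).symm
  have hs' : s ^ (α/2 - 1) = ρ ^ (α - 2) := by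
    rw [hs_rho, ← Real.rpow_natCast ρ 2, ← Real.rpow_mul hρ.le]
    congr 1
    push_cast
    ring
  have hr1 : ρ ^ (α - 2) * ρ = ρ ^ (α - 1) := by
    nth_rewrite 1 [show (α - 1 : ℝ) = (α - 2) + 1 by ring]
    rw [Real.rpow_add_one hρ.ne']
  set M : ℝ := α * k θ₀ * ρ ^ (α - 1) * c₀ with hMdef
  have hMnn : 0 ≤ M :=
    mul_nonneg (mul_nonneg (mul_nonneg hα.le hk₀.le) (Real.rpow_nonneg hρ.le _)) hc₀nn
  -- norm of D v
  have hnormDv : ∀ v : ℂ, ‖D v‖ = (α * s ^ (α/2 - 1)) * (c₀ *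
      Real.sqrt ((z₀.re*v.re + z₀.im*v.im)^2 + (k θ₀ * (z₀.re*v.im - z₀.im*v.re))^2)) := by
    intro v
    rw [hDv v, norm_smul, Real.norm_eq_abs, _root_.abs_of_nonneg (mul_nonneg hα.le hsnn)]
    rw [norm_mul, habsg]
    congr 1
    congr 1
    have : ((z₀.re*v.re + z₀.im*v.im : ℝ) : ℂ) + ((k θ₀ : ℝ) : ℂ) *
        ((z₀.re*v.im - z₀.im*v.re : ℝ) : ℂ) * I
        = ((z₀.re*v.re + z₀.im*v.im : ℝ) : ℂ) +
          ((k θ₀ * (z₀.re*v.im - z₀.im*v.re) : ℝ) : ℂ) * I := by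
      push_cast; ring
    rw [this, Complex.norm_add_mul_I]
  -- upper bound
  have hub : ∀ v : ℂ, ‖D v‖ ≤ M * ‖v‖ := by
    intro v
    rw [hnormDv v]
    have hABid : (z₀.re*v.im - z₀.im*v.re)^2 + (z₀.re*v.re + z₀.im*v.im)^2 = s * ‖v‖^2 := by
      rw [Complex.sq_norm, Complex.normSq_apply, hsdef, Complex.normSq_apply]
      ring
    have h1 : (z₀.re*v.re + z₀.im*v.im)^2 + (k θ₀ * (z₀.re*v.im - z₀.im*v.re))^2
        ≤ (k θ₀ * (Real.sqrt s * ‖v‖))^2 := by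
      have hss : (Real.sqrt s * ‖v‖)^2 = s * ‖v‖^2 := by
        rw [mul_pow, Real.sq_sqrt hs.le]
      have hk2 : 1 ≤ k θ₀ ^ 2 := by nlinarith [hk1 θ₀]
      nlinarith [sq_nonneg (z₀.re*v.re + z₀.im*v.im), sq_nonneg (z₀.re*v.im - z₀.im*v.re)]
    have h2 := Real.sqrt_le_sqrt h1
    rw [Real.sqrt_sq (by positivity)] at h2
    calc (α * s ^ (α/2 - 1)) * (c₀ * Real.sqrt ((z₀.re*v.re + z₀.im*v.im)^2
          + (k θ₀ * (z₀.re*v.im - z₀.im*v.re))^2))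
        ≤ (α * s ^ (α/2 - 1)) * (c₀ * (k θ₀ * (Real.sqrt s * ‖v‖))) := by
          gcongr
      _ = M * ‖v‖ := by
          rw [hMdef, hs', hsqrt_s]
          linear_combination (α * c₀ * k θ₀ * ‖v‖) * hr1
  -- the norm is attained at v = I * z₀
  have hlb : M ≤ ‖D‖ := by
    have hv₀ : ‖D (I * z₀)‖ = M * ρ := by
      rw [hnormDv (I * z₀)]
      have hre : (I * z₀).re = -z₀.im := by simp
      have him : (I * z₀).im = z₀.re := by simp
      rw [hre, him]
      have h0 : z₀.re * -z₀.im + z₀.im * z₀.re = 0 := by ring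
      have hA : z₀.re * z₀.re - z₀.im * -z₀.im = s := by
        rw [hsdef, Complex.normSq_apply]; ring
      rw [h0, hA]
      have : Real.sqrt ((0:ℝ)^2 + (k θ₀ * s)^2) = k θ₀ * s := by
        rw [show ((0:ℝ)^2 + (k θ₀ * s)^2) = (k θ₀ * s)^2 by ring]
        exact Real.sqrt_sq (by positivity)
      rw [this, hMdef, hs']
      have : ρ ^ (α - 2) * s = ρ ^ (α - 1) * ρ := by
        rw [hs_rho]
        push_cast
        rw [← hr1]
        ring
      linear_combination (α * c₀ * k θ₀) * this
    have h := D.le_opNorm (I * z₀)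
    rw [hv₀] at h
    have hnIz : ‖I * z₀‖ = ρ := by
      rw [norm_mul, Complex.norm_I, one_mul, hρdef]
    rw [hnIz] at h
    exact le_of_mul_le_mul_right h hρ
  have hnormD : ‖D‖ = M := le_antisymm (D.opNorm_le_bound hMnn hub) hlb
  rw [hnormD, hMdef]
  have hc₀sq : c₀ ^ 2 = η₁ θ₀ ^ 2 + η₂ θ₀ ^ 2 := Real.sq_sqrt (by positivity)
  have hρsq : (ρ ^ (α - 1)) ^ 2 = ρ ^ (2 * (α - 1)) := by
    rw [← Real.rpow_natCast (ρ ^ (α - 1)) 2, ← Real.rpow_mul hρ.le]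
    congr 1
    push_cast
    ring
  rw [mul_pow, mul_pow, mul_pow, hc₀sq, hρsq]
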